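/- Let G be a finite simple graph without isolated vertices with m edges, and let a < 0 be a real number. Then ISD_a(G) + M_1^{a+1}(G) ≥ 2m. -/

import Mathlib

open Finset Real

/-- The variable inverse sum deg index
`ISD_a(G) = Σ_{uv ∈ E(G)} 1/(d_u^a + d_v^a)`. -/
noncomputable def ISD {V : Type*} [Fintype V] [DecidableEq V] (G : SimpleGraph V)
    [DecidableRel G.Adj] (a : ℝ) : ℝ :=
  ∑ e ∈ G.edgeFinset,
    Sym2.lift ⟨fun u v => 1 / ((G.degree u : ℝ) ^ a + (G.degree v : ℝ) ^ a),
      fun u v => by simp [add_comm]⟩ e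

/-- The variable first Zagreb index `M₁^α(G) = Σ_{u ∈ V(G)} d_u^α`. -/
noncomputable def varZagreb1 {V : Type*} [Fintype V] (G : SimpleGraph V)
    [DecidableRel G.Adj] (α : ℝ) : ℝ :=
  ∑ u : V, (G.degree u : ℝ) ^ α

lemma sum_dart_fst_eq_deg {V : Type*} [Fintype V] [DecidableEq V] (G : SimpleGraph V)
    [DecidableRel G.Adj] (f : V → ℝ) :
    ∑ d : G.Dart, f d.fst = ∑ v : V, (G.degree v : ℝ) * f v := by
  rw [← Finset.sum_fiberwise Finset.univ (fun d : G.Dart => d.fst) (fun d => f d.fst)]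
  refine Finset.sum_congr rfl fun v _ => ?_
  have h1 : ∑ d ∈ Finset.univ.filter (fun d : G.Dart => d.fst = v), f d.fst
      = ∑ _d ∈ Finset.univ.filter (fun d : G.Dart => d.fst = v), f v :=
    Finset.sum_congr rfl fun d hd => by rw [(Finset.mem_filter.mp hd).2]
  rw [h1, Finset.sum_const, nsmul_eq_mul,
    show (Finset.univ.filter fun d : G.Dart => d.fst = v).card = G.degree v from
      G.dart_fst_fiber_card_eq_degree v]

lemma sum_dart_fst_eq_edge {V : Type*} [Fintype V] [DecidableEq V] (G : SimpleGraph V)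
    [DecidableRel G.Adj] (f : V → ℝ) :
    ∑ d : G.Dart, f d.fst =
      ∑ e ∈ G.edgeFinset, Sym2.lift ⟨fun u v => f u + f v, fun u v => add_comm _ _⟩ e := by
  rw [← Finset.sum_fiberwise_of_maps_to (t := G.edgeFinset) (g := fun d : G.Dart => d.edge)
    (fun d _ => by rw [SimpleGraph.mem_edgeFinset]; exact d.edge_mem)]
  refine Finset.sum_congr rfl fun e he => ?_
  rw [SimpleGraph.mem_edgeFinset] at he
  induction' e with u v
  have hd : G.Adj u v := he
  let d : G.Dart := ⟨(u, v), hd⟩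
  have hfib : (Finset.univ.filter fun d' : G.Dart => d'.edge = s(u, v)) = {d, d.symm} := by
    have := d.edge_fiber
    convert this
    rfl
  rw [hfib, Finset.sum_pair d.symm_ne.symm]
  simp [d, SimpleGraph.Dart.symm]

theorem stmt_14 {V : Type*} [Fintype V] [DecidableEq V] [Nonempty V] (G : SimpleGraph V)
    [DecidableRel G.Adj] (hiso : ∀ v : V, 0 < G.degree v) (a : ℝ) (ha : a < 0) :
    (2 * (G.edgeFinset.card : ℝ) ≤ ISD G a + varZagreb1 G (a + 1)) := by
  have hz : varZagreb1 G (a + 1) =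
      ∑ e ∈ G.edgeFinset, Sym2.lift ⟨fun u v => (G.degree u : ℝ) ^ a + (G.degree v : ℝ) ^ a,
        fun u v => add_comm _ _⟩ e := by
    rw [varZagreb1, ← sum_dart_fst_eq_edge G (fun v => (G.degree v : ℝ) ^ a),
      sum_dart_fst_eq_deg G (fun v => (G.degree v : ℝ) ^ a)]
    refine Finset.sum_congr rfl fun v _ => ?_
    have hpos : (0 : ℝ) < (G.degree v : ℝ) := by exact_mod_cast hiso v
    rw [Real.rpow_add hpos, Real.rpow_one, mul_comm]
  rw [ISD, hz, ← Finset.sum_add_distrib]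
  have : 2 * (G.edgeFinset.card : ℝ) = ∑ _e ∈ G.edgeFinset, (2 : ℝ) := by
    rw [Finset.sum_const, nsmul_eq_mul, mul_comm]
  rw [this]
  refine Finset.sum_le_sum fun e he => ?_
  induction' e with u v
  simp only [Sym2.lift_mk]
  set t : ℝ := (G.degree u : ℝ) ^ a + (G.degree v : ℝ) ^ a with ht
  have htpos : 0 < t := by
    have h1 : (0 : ℝ) < (G.degree u : ℝ) ^ a :=
      Real.rpow_pos_of_pos (by exact_mod_cast hiso u) a
    have h2 : (0 : ℝ) < (G.degree v : ℝ) ^ a :=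
      Real.rpow_pos_of_pos (by exact_mod_cast hiso v) a
    positivity
  have hmul : 1 / t * t = 1 := one_div_mul_cancel htpos.ne'
  nlinarith [sq_nonneg (t - 1), mul_pos htpos htpos]
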